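/- The constructs of the ordered hypercube hypergraph 𝐂^X on X = {x₁ < ... < x_n}, defined by 𝐂^X = { {x₁,...,x_i} : 1 ≤ i ≤ n }, are in bijection with words of length n over the alphabet {+, −, •} whose first letter is +. -/

import Mathlib

variable {α : Type*}

/-- `ConnIn E X`: the restriction of the edge set `E` to `X` is connected: every nontrivial
partition of `X` is crossed by an edge of `E` lying inside `X`. -/
def ConnIn (E : Set (Set α)) (X : Set α) : Prop :=
  ∀ X₁ X₂ : Set α, X₁ ∪ X₂ = X → Disjoint X₁ X₂ → X₁.Nonempty → X₂.Nonempty →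
    ∃ e ∈ E, e ⊆ X ∧ ¬ e ⊆ X₁ ∧ ¬ e ⊆ X₂

/-- `C` is a connected component of the hypergraph with edge set `E` restricted to the
carrier `H`. -/
def IsCCOn (E : Set (Set α)) (H : Set α) (C : Set α) : Prop :=
  C.Nonempty ∧ C ⊆ H ∧ ConnIn E C ∧ ∀ Z, C ⊆ Z → Z ⊆ H → ConnIn E Z → Z = C

/-- `IsConstruct E H S` : `S` is (the tubing `ψ(T)` canonically and bijectively encoding) a
construct `T` of the hypergraph with edge set `E` and carrier `H`.  A construct with root
`Y` (nonempty, `Y ⊆ H`) grafts a construct on each connected component of `H \ Y`; its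
tubing is `{H}` together with the tubings of its subtrees. -/
inductive IsConstruct (E : Set (Set α)) : Set α → Set (Set α) → Prop
  | node (H Y : Set α) (F : Set α → Set (Set α)) :
      Y.Nonempty → Y ⊆ H →
      (∀ C, IsCCOn E (H \ Y) C → IsConstruct E C (F C)) →
      IsConstruct E H (insert H (⋃ C ∈ {C | IsCCOn E (H \ Y) C}, F C))

/-- The hyperedges of the hypercube hypergraph `𝐂^X` on the ordered set `X = Fin n`:
the initial segments `{x₁, …, x_i}` for `1 ≤ i ≤ n`. -/
def cubeEdges (n : ℕ) : Set (Set (Fin n)) :=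
  {e | ∃ i : Fin n, e = {j | j ≤ i}}

namespace Stmt15

variable {n : ℕ}

lemma iic_mem_cube (i : Fin n) : Set.Iic i ∈ cubeEdges n := ⟨i, rfl⟩

lemma cube_edge_eq {e : Set (Fin n)} (he : e ∈ cubeEdges n) : ∃ i, e = Set.Iic i := he

lemma fin3_cases : ∀ a : Fin 3, a = 0 ∨ a = 1 ∨ a = 2 := by decide

/-- zero of Fin n -/
def zf (m : Fin n) : Fin n := ⟨0, m.pos⟩

lemma zf_le (m x : Fin n) : zf m ≤ x := by simp [zf, Fin.le_def]

lemma connIn_subsingleton {E : Set (Set α)} {Z : Set α} (h : Z.Subsingleton) : ConnIn E Z := by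
  intro X₁ X₂ hu hd h1 h2
  obtain ⟨a, ha⟩ := h1
  obtain ⟨b, hb⟩ := h2
  have hab : a = b := h (hu ▸ Set.mem_union_left _ ha) (hu ▸ Set.mem_union_right _ hb)
  exact absurd (hd.ne_of_mem ha hb) (by simp [hab])

lemma connIn_singleton (E : Set (Set α)) (x : α) : ConnIn E {x} :=
  connIn_subsingleton (Set.subsingleton_singleton)

lemma connIn_Iic_aux (m : Fin n) (X₁ X₂ : Set (Fin n)) (hu : X₁ ∪ X₂ = Set.Iic m)
    (hd : Disjoint X₁ X₂) (hz : zf m ∈ X₁) (h2 : X₂.Nonempty) :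
    ∃ e ∈ cubeEdges n, e ⊆ Set.Iic m ∧ ¬ e ⊆ X₁ ∧ ¬ e ⊆ X₂ := by
  obtain ⟨i, hi, hmin⟩ := Set.exists_min_image X₂ id X₂.toFinite h2
  have hi2 : i ∈ Set.Iic m := hu ▸ Set.mem_union_right _ hi
  refine ⟨Set.Iic i, iic_mem_cube i, Set.Iic_subset_Iic.2 hi2, ?_, ?_⟩
  · intro hsub
    exact hd.ne_of_mem (hsub (Set.mem_Iic.2 le_rfl)) hi rfl
  · intro hsub
    exact hd.ne_of_mem hz (hsub (Set.mem_Iic.2 (zf_le m i))) rfl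

lemma connIn_Iic (m : Fin n) : ConnIn (cubeEdges n) (Set.Iic m) := by
  intro X₁ X₂ hu hd h1 h2
  have hz : zf m ∈ X₁ ∪ X₂ := hu ▸ Set.mem_Iic.2 (zf_le m m)
  rcases hz with hz | hz
  · exact connIn_Iic_aux m X₁ X₂ hu hd hz h2
  · obtain ⟨e, he, hsub, h1', h2'⟩ :=
      connIn_Iic_aux m X₂ X₁ (Set.union_comm X₁ X₂ ▸ hu) hd.symm hz h1
    exact ⟨e, he, hsub, h2', h1'⟩

lemma conn_Iic_subset {Z : Set (Fin n)} (hc : ConnIn (cubeEdges n) Z) {a b : Fin n}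
    (ha : a ∈ Z) (hb : b ∈ Z) (hab : a < b) : Set.Iic b ⊆ Z := by
  by_contra hns
  have hne : (Set.Iic b \ Z).Nonempty := by
    rw [Set.diff_nonempty]; exact hns
  obtain ⟨c, hc', hcmin⟩ := Set.exists_min_image _ id (Set.Iic b \ Z).toFinite hne
  obtain ⟨hcb, hcZ⟩ := hc'
  by_cases hc0 : c.val = 0
  · -- 0 ∉ Z : any crossing edge contains 0
    have hu : {y ∈ Z | y ≤ a} ∪ {y ∈ Z | a < y} = Z := by
      ext y
      simp only [Set.mem_union, Set.mem_sep_iff]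
      exact ⟨fun h => h.elim And.left And.left,
        fun hy => (le_or_gt y a).imp (fun h => ⟨hy, h⟩) (fun h => ⟨hy, h⟩)⟩
    have hd : Disjoint {y ∈ Z | y ≤ a} {y ∈ Z | a < y} := by
      rw [Set.disjoint_left]
      rintro y ⟨_, h⟩ ⟨_, h'⟩
      exact absurd h (not_le.2 h')
    obtain ⟨e, he, hsub, h1', _⟩ := hc _ _ hu hd ⟨a, ha, le_rfl⟩ ⟨b, hb, hab⟩
    obtain ⟨i, rfl⟩ := cube_edge_eq he
    have hczf : c = zf b := by apply Fin.ext; simpa [zf] using hc0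
    exact hcZ (hsub (hczf ▸ Set.mem_Iic.2 (zf_le b i)))
  · have h0Z : zf b ∈ Z := by
      by_contra h0
      have : c ≤ zf b := hcmin (zf b) ⟨zf_le b b, h0⟩
      exact absurd (Nat.le_zero.1 (Fin.le_def.1 this)) hc0
    have hcltb : c < b := lt_of_le_of_ne hcb (fun h => hcZ (h ▸ hb))
    have hu : {y ∈ Z | y < c} ∪ {y ∈ Z | c ≤ y} = Z := by
      ext y
      simp only [Set.mem_union, Set.mem_sep_iff]
      exact ⟨fun h => h.elim And.left And.left,
        fun hy => (lt_or_ge y c).imp (fun h => ⟨hy, h⟩) (fun h => ⟨hy, h⟩)⟩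
    have hd : Disjoint {y ∈ Z | y < c} {y ∈ Z | c ≤ y} := by
      rw [Set.disjoint_left]
      rintro y ⟨_, h⟩ ⟨_, h'⟩
      exact absurd h (not_lt.2 h')
    obtain ⟨e, he, hsub, h1', _⟩ := hc _ _ hu hd
      ⟨zf b, h0Z, Fin.lt_def.2 (Nat.pos_of_ne_zero hc0)⟩ ⟨b, hb, hcltb.le⟩
    obtain ⟨i, rfl⟩ := cube_edge_eq he
    rw [Set.not_subset] at h1'
    obtain ⟨y, hyi, hy⟩ := h1'
    have hyZ : y ∈ Z := hsub hyi
    have hyc : c ≤ y := by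
      by_contra h
      exact hy ⟨hyZ, not_le.1 h⟩
    have hci : c ≤ i := le_trans hyc hyi
    exact hcZ (hsub hci)

def fpred {n : ℕ} (k : Fin n) : Fin n := ⟨k.val - 1, lt_of_le_of_lt (Nat.sub_le _ _) k.isLt⟩

lemma le_fpred_iff {n : ℕ} {k x : Fin n} (hk : 0 < k.val) : x ≤ fpred k ↔ x < k := by
  simp only [Fin.le_def, Fin.lt_def, fpred]
  omega

lemma isCCOn_not_empty {n : ℕ} {E : Set (Set (Fin n))} {C : Set (Fin n)} :
    ¬ IsCCOn E (∅ : Set (Fin n)) C := by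
  rintro ⟨⟨x, hx⟩, hsub, -⟩
  exact hsub hx

/-- Characterization of the connected components of `Iic m \ Y` where `k = min Y`. -/
lemma compChar {n : ℕ} (m k : Fin n) (Y : Set (Fin n)) (hYm : Y ⊆ Set.Iic m)
    (hkY : k ∈ Y) (hmin : ∀ y ∈ Y, k ≤ y) (C : Set (Fin n)) :
    IsCCOn (cubeEdges n) (Set.Iic m \ Y) C ↔
      (0 < k.val ∧ C = Set.Iic (fpred k)) ∨
      (∃ x : Fin n, x ≤ m ∧ x ∉ Y ∧ k < x ∧ C = {x}) := by
  have hkm : k ≤ m := hYm hkY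
  have hkH : k ∉ Set.Iic m \ Y := fun h => h.2 hkY
  have hltH : ∀ x : Fin n, x < k → x ∈ Set.Iic m \ Y := by
    intro x hx
    exact ⟨le_trans hx.le hkm, fun hxY => absurd (hmin x hxY) (not_le.2 hx)⟩
  constructor
  · rintro ⟨hne, hsub, hconn, hmax⟩
    by_cases hs : C.Subsingleton
    · obtain ⟨x, hx⟩ := hne
      have hCx : C = {x} := hs.eq_singleton_of_mem hx
      have hxH : x ∈ Set.Iic m \ Y := hsub hx
      have hxk : x ≠ k := fun h => hkH (h ▸ hxH)
      rcases lt_or_gt_of_ne hxk with hlt | hgt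
      · left
        have hk0 : 0 < k.val := lt_of_le_of_lt (Nat.zero_le _) (Fin.lt_def.1 hlt)
        refine ⟨hk0, ?_⟩
        have hCsub : C ⊆ Set.Iic (fpred k) := by
          rw [hCx]
          simpa [Set.singleton_subset_iff] using (le_fpred_iff hk0).2 hlt
        have hIsub : Set.Iic (fpred k) ⊆ Set.Iic m \ Y := fun y hy =>
          hltH y ((le_fpred_iff hk0).1 hy)
        exact (hmax _ hCsub hIsub (connIn_Iic _)).symm
      · right
        exact ⟨x, hxH.1, hxH.2, hgt, hCx⟩
    · -- C has two distinct elements: all elements are < k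
      obtain ⟨c0, hc0C, d0, hd0C, hcd0⟩ := Set.not_subsingleton_iff.1 hs
      have hmaxel : ∀ u v : Fin n, u ∈ C → v ∈ C → u < v → v < k := by
        intro u v huC hvC huv
        have hIic : Set.Iic v ⊆ C := conn_Iic_subset hconn huC hvC huv
        by_contra h
        have : k ∈ C := hIic (Set.mem_Iic.2 (not_lt.1 h))
        exact hkH (hsub this)
      have hallt : ∀ c ∈ C, c < k := by
        intro c hcC
        obtain ⟨d, hdC, hdc⟩ : ∃ d ∈ C, d ≠ c := by
          rcases eq_or_ne c0 c with h | h
          · exact ⟨d0, hd0C, fun hh => hcd0 (hh.trans h.symm).symm⟩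
          · exact ⟨c0, hc0C, h⟩
        rcases lt_or_gt_of_ne hdc with h | h
        · exact hmaxel d c hdC hcC h
        · exact lt_trans h (hmaxel c d hcC hdC h)
      have hk0 : 0 < k.val := lt_of_le_of_lt (Nat.zero_le _) (Fin.lt_def.1 (hallt c0 hc0C))
      left
      refine ⟨hk0, ?_⟩
      have hCsub : C ⊆ Set.Iic (fpred k) := fun c hcC =>
        Set.mem_Iic.2 ((le_fpred_iff hk0).2 (hallt c hcC))
      have hIsub : Set.Iic (fpred k) ⊆ Set.Iic m \ Y := fun y hy =>
        hltH y ((le_fpred_iff hk0).1 hy)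
      exact (hmax _ hCsub hIsub (connIn_Iic _)).symm
  · rintro (⟨hk0, rfl⟩ | ⟨x, hxm, hxY, hkx, rfl⟩)
    · refine ⟨⟨zf k, Set.mem_Iic.2 (zf_le k _)⟩, fun y hy => hltH y ((le_fpred_iff hk0).1 hy),
        connIn_Iic _, ?_⟩
      intro Z hCZ hZH hZconn
      apply Set.Subset.antisymm _ hCZ
      intro z hz
      rw [Set.mem_Iic, le_fpred_iff hk0]
      by_contra h
      have hkz : k < z := by
        rcases lt_or_eq_of_le (not_lt.1 h) with h' | h'
        · exact h'
        · exact absurd (h' ▸ hz) (fun hzH => hkH (hZH hzH))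
      have h0Z : zf k ∈ Z := hCZ (Set.mem_Iic.2 (zf_le k _))
      have h0z : zf k < z :=
        Fin.lt_def.2 (show 0 < z.val by have := Fin.lt_def.1 hkz; omega)
      have hsubZ : Set.Iic z ⊆ Z := conn_Iic_subset hZconn h0Z hz h0z
      exact hkH (hZH (hsubZ (Set.mem_Iic.2 hkz.le)))
    · refine ⟨⟨x, rfl⟩, by simpa [Set.singleton_subset_iff] using ⟨hxm, hxY⟩,
        connIn_singleton _ _, ?_⟩
      intro Z hCZ hZH hZconn
      apply Set.Subset.antisymm _ hCZ
      intro z hz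
      rw [Set.mem_singleton_iff]
      by_contra hzx
      have hxZ : x ∈ Z := hCZ rfl
      have : Set.Iic (max x z) ⊆ Z := by
        rcases lt_or_gt_of_ne hzx with h | h
        · rw [max_eq_left h.le]
          exact conn_Iic_subset hZconn hz hxZ h
        · rw [max_eq_right h.le]
          exact conn_Iic_subset hZconn hxZ hz h
      have hkZ : k ∈ Z := this (Set.mem_Iic.2 (le_trans hkx.le (le_max_left x z)))
      exact hkH (hZH hkZ)

lemma diff_self_empty {x : Fin n} : ({x} : Set (Fin n)) \ {x} = ∅ := by simp

lemma isCCOn_sdiff_singleton {E : Set (Set (Fin n))} {x : Fin n} {C : Set (Fin n)} :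
    ¬ IsCCOn E (({x} : Set (Fin n)) \ {x}) C := by
  rw [diff_self_empty]
  exact isCCOn_not_empty

lemma isConstruct_singleton (E : Set (Set (Fin n))) (x : Fin n) :
    IsConstruct E {x} {({x} : Set (Fin n))} := by
  have h := IsConstruct.node (E := E) {x} {x} (fun C => {C}) ⟨x, rfl⟩ le_rfl
    (fun C hC => absurd hC isCCOn_sdiff_singleton)
  have he : {C | IsCCOn E (({x} : Set (Fin n)) \ {x}) C} = ∅ := by
    ext C; simp only [Set.mem_setOf_eq, Set.mem_empty_iff_false, iff_false]
    exact isCCOn_sdiff_singleton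
  rw [he, Set.biUnion_empty] at h
  convert h using 1
  simp

lemma isConstruct_singleton_eq {E : Set (Set (Fin n))} {x : Fin n} {S : Set (Set (Fin n))}
    (h : IsConstruct E {x} S) : S = {({x} : Set (Fin n))} := by
  cases h with
  | node H Y F hne hsub hrec =>
    have hY : Y = {x} := (Set.subset_singleton_iff_eq.1 hsub).resolve_left
      (fun h' => hne.ne_empty h')
    subst hY
    have he : {C | IsCCOn E (({x} : Set (Fin n)) \ {x}) C} = ∅ := by
      ext C; simp only [Set.mem_setOf_eq, Set.mem_empty_iff_false, iff_false]
      exact isCCOn_sdiff_singleton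
    rw [he, Set.biUnion_empty]
    simp

open scoped Classical in
/-- position of the last `+` at or before `m` -/
noncomputable def kIdx (w : Fin n → Fin 3) (m : Fin n) : Fin n :=
  ⟨Nat.findGreatest (fun j => ∃ h : j < n, w ⟨j, h⟩ = 0) m.val,
   lt_of_le_of_lt (Nat.findGreatest_le _) m.isLt⟩

lemma kIdx_le (w : Fin n → Fin 3) (m : Fin n) : kIdx w m ≤ m :=
  Fin.le_def.2 (Nat.findGreatest_le _)

lemma kIdx_spec {w : Fin n → Fin 3} (m : Fin n) (h0 : w ⟨0, m.pos⟩ = 0) :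
    w (kIdx w m) = 0 := by
  classical
  have h := Nat.findGreatest_spec (P := fun j => ∃ h : j < n, w ⟨j, h⟩ = 0)
    (Nat.zero_le m.val) ⟨m.pos, h0⟩
  obtain ⟨h1, h2⟩ := h
  convert h2 using 2
  unfold kIdx; congr 1

lemma kIdx_gt {w : Fin n → Fin 3} {m x : Fin n} (h1 : kIdx w m < x) (h2 : x ≤ m) :
    w x ≠ 0 := by
  classical
  intro hx
  exact Nat.findGreatest_is_greatest (Fin.lt_def.1 h1) (Fin.le_def.1 h2) ⟨x.isLt, by simpa using hx⟩

open scoped Classical in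
/-- The tubing encoded by a word `w`, on the carrier `Iic m`. -/
noncomputable def T (w : Fin n → Fin 3) (m : Fin n) : Set (Set (Fin n)) :=
  insert (Set.Iic m)
    ({s | ∃ x : Fin n, kIdx w m < x ∧ x ≤ m ∧ w x = 1 ∧ s = ({x} : Set (Fin n))} ∪
      (if h : 0 < (kIdx w m).val then T w (fpred (kIdx w m)) else ∅))
termination_by m.val
decreasing_by
  · have h1 : (kIdx w m).val ≤ m.val := Nat.findGreatest_le _
    simp only [fpred]
    omega

lemma T_self_mem (w : Fin n → Fin 3) (m : Fin n) : Set.Iic m ∈ T w m := by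
  rw [T]; exact Set.mem_insert _ _

lemma T_subset_Iic (w : Fin n → Fin 3) : ∀ (m : Fin n), ∀ A ∈ T w m, A ⊆ Set.Iic m := by
  have H : ∀ N : ℕ, ∀ m : Fin n, m.val < N → ∀ A ∈ T w m, A ⊆ Set.Iic m := by
    intro N
    induction N with
    | zero => intro m hm; omega
    | succ N ih =>
      intro m hm A hA
      rw [T] at hA
      rcases hA with rfl | hA
      · exact le_refl _
      rcases hA with ⟨x, hkx, hxm, hw, rfl⟩ | hA
      · simpa [Set.singleton_subset_iff] using hxm
      · rcases Nat.decLt 0 (kIdx w m).val with h | h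
        · rw [dif_neg h] at hA; exact absurd hA (Set.notMem_empty _)
        · rw [dif_pos h] at hA
          have hlt : (fpred (kIdx w m)).val < N := by
            have h1 : (kIdx w m).val ≤ m.val := Nat.findGreatest_le _
            simp only [fpred]
            omega
          have := ih _ hlt A hA
          refine this.trans (Set.Iic_subset_Iic.2 ?_)
          have h1 : (kIdx w m).val ≤ m.val := Nat.findGreatest_le _
          rw [Fin.le_def]
          simp only [fpred]
          omega
  intro m
  exact H (m.val + 1) m (Nat.lt_succ_self _)

lemma findGreatest_congr {P Q : ℕ → Prop} [DecidablePred P] [DecidablePred Q] :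
    ∀ (m : ℕ), (∀ j ≤ m, (P j ↔ Q j)) → Nat.findGreatest P m = Nat.findGreatest Q m := by
  intro m
  induction m with
  | zero => intro _; rfl
  | succ m ih =>
    intro h
    rw [Nat.findGreatest_succ, Nat.findGreatest_succ]
    by_cases hp : P (m + 1)
    · rw [if_pos hp, if_pos ((h _ le_rfl).1 hp)]
    · rw [if_neg hp, if_neg (fun hq => hp ((h _ le_rfl).2 hq))]
      exact ih (fun j hj => h j (le_trans hj (Nat.le_succ _)))

lemma kIdx_congr {w w' : Fin n → Fin 3} {m : Fin n} (h : ∀ x ≤ m, w x = w' x) :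
    kIdx w m = kIdx w' m := by
  classical
  apply Fin.ext
  simp only [kIdx]
  apply findGreatest_congr
  intro j hj
  constructor
  · rintro ⟨hjn, hw⟩
    exact ⟨hjn, by rw [← h ⟨j, hjn⟩ (Fin.le_def.2 hj)]; exact hw⟩
  · rintro ⟨hjn, hw⟩
    exact ⟨hjn, by rw [h ⟨j, hjn⟩ (Fin.le_def.2 hj)]; exact hw⟩

lemma T_congr {w w' : Fin n → Fin 3} : ∀ (m : Fin n), (∀ x ≤ m, w x = w' x) →
    T w m = T w' m := by
  have H : ∀ N : ℕ, ∀ m : Fin n, m.val < N → (∀ x ≤ m, w x = w' x) → T w m = T w' m := by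
    intro N
    induction N with
    | zero => intro m hm; omega
    | succ N ih =>
      intro m hm h
      have hk : kIdx w m = kIdx w' m := kIdx_congr h
      conv_lhs => rw [T]
      conv_rhs => rw [T]
      rw [← hk]
      congr 1
      congr 1
      · ext s
        simp only [Set.mem_setOf_eq]
        constructor
        · rintro ⟨x, h1, h2, h3, rfl⟩
          exact ⟨x, h1, h2, by rw [← h x h2]; exact h3, rfl⟩
        · rintro ⟨x, h1, h2, h3, rfl⟩
          exact ⟨x, h1, h2, by rw [h x h2]; exact h3, rfl⟩
      · rcases Nat.decLt 0 (kIdx w m).val with hpos | hpos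
        · rw [dif_neg hpos, dif_neg hpos]
        · rw [dif_pos hpos, dif_pos hpos]
          have h1 : (kIdx w m).val ≤ m.val := Nat.findGreatest_le _
          have hlt : (fpred (kIdx w m)).val < N := by simp only [fpred]; omega
          apply ih _ hlt
          intro x hx
          apply h
          refine le_trans hx (Fin.le_def.2 ?_)
          simp only [fpred]
          omega
  intro m
  exact H (m.val + 1) m (Nat.lt_succ_self _)

lemma ne_one_of_zero : (0 : Fin 3) ≠ 1 := by decide
lemma ne_one_of_two : (2 : Fin 3) ≠ 1 := by decide

lemma constructT (w : Fin n → Fin 3) : ∀ (m : Fin n), w ⟨0, m.pos⟩ = 0 →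
    IsConstruct (cubeEdges n) (Set.Iic m) (T w m) := by
  classical
  have H : ∀ N : ℕ, ∀ m : Fin n, m.val < N → w ⟨0, m.pos⟩ = 0 →
      IsConstruct (cubeEdges n) (Set.Iic m) (T w m) := by
    intro N
    induction N with
    | zero => intro m hm; omega
    | succ N ih =>
      intro m hm h0
      set k : Fin n := kIdx w m with hkdef
      have hwk : w k = 0 := kIdx_spec m h0
      set Y : Set (Fin n) := {x | k ≤ x ∧ x ≤ m ∧ w x ≠ 1} with hYdef
      have hkY : k ∈ Y := ⟨le_rfl, kIdx_le w m, by rw [hwk]; exact ne_one_of_zero⟩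
      have hmin : ∀ y ∈ Y, k ≤ y := fun y hy => hy.1
      have hYm : Y ⊆ Set.Iic m := fun y hy => hy.2.1
      set F : Set (Fin n) → Set (Set (Fin n)) :=
        fun C => if 0 < k.val ∧ C = Set.Iic (fpred k) then T w (fpred k) else {C} with hFdef
      have hsingF : ∀ x : Fin n, k < x → F {x} = {({x} : Set (Fin n))} := by
        intro x hkx
        rw [hFdef]
        apply if_neg
        rintro ⟨hk0, hx⟩
        have hz : zf x ∈ Set.Iic (fpred k) := Set.mem_Iic.2 (zf_le x _)
        rw [← hx, Set.mem_singleton_iff] at hz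
        have hx0 : (0 : ℕ) = x.val := congrArg Fin.val hz
        have := Fin.lt_def.1 hkx
        omega
      have hrec : ∀ C, IsCCOn (cubeEdges n) (Set.Iic m \ Y) C →
          IsConstruct (cubeEdges n) C (F C) := by
        intro C hC
        rw [compChar m k Y hYm hkY hmin] at hC
        rcases hC with ⟨hk0, rfl⟩ | ⟨x, hxm, hxY, hkx, rfl⟩
        · have hFC : F (Set.Iic (fpred k)) = T w (fpred k) := if_pos ⟨hk0, rfl⟩
          rw [hFC]
          apply ih
          · have : k.val ≤ m.val := Fin.le_def.1 (kIdx_le w m)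
            simp only [fpred]
            omega
          · exact h0
        · rw [hsingF x hkx]
          exact isConstruct_singleton _ _
      have hset : (⋃ C ∈ {C | IsCCOn (cubeEdges n) (Set.Iic m \ Y) C}, F C) =
          {s | ∃ x : Fin n, k < x ∧ x ≤ m ∧ w x = 1 ∧ s = ({x} : Set (Fin n))} ∪
            (if h : 0 < k.val then T w (fpred k) else ∅) := by
        ext A
        simp only [Set.mem_iUnion, exists_prop, Set.mem_setOf_eq, Set.mem_union]
        constructor
        · rintro ⟨C, hC, hA⟩
          rw [compChar m k Y hYm hkY hmin] at hC
          rcases hC with ⟨hk0, rfl⟩ | ⟨x, hxm, hxY, hkx, rfl⟩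
          · right
            rw [dif_pos hk0]
            have hFC : F (Set.Iic (fpred k)) = T w (fpred k) := if_pos ⟨hk0, rfl⟩
            rwa [hFC] at hA
          · left
            rw [hsingF x hkx, Set.mem_singleton_iff] at hA
            refine ⟨x, hkx, hxm, ?_, hA⟩
            by_contra hw1
            exact hxY ⟨hkx.le, hxm, hw1⟩
        · rintro (⟨x, hkx, hxm, hw1, rfl⟩ | hA)
          · refine ⟨{x}, ?_, ?_⟩
            · show IsCCOn (cubeEdges n) (Set.Iic m \ Y) {x}
              rw [compChar m k Y hYm hkY hmin]
              exact Or.inr ⟨x, hxm, fun hY => hY.2.2 hw1, hkx, rfl⟩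
            · rw [hsingF x hkx]
              exact rfl
          · by_cases hk0 : 0 < k.val
            · rw [dif_pos hk0] at hA
              refine ⟨Set.Iic (fpred k), ?_, ?_⟩
              · show IsCCOn (cubeEdges n) (Set.Iic m \ Y) (Set.Iic (fpred k))
                rw [compChar m k Y hYm hkY hmin]
                exact Or.inl ⟨hk0, rfl⟩
              · show A ∈ F (Set.Iic (fpred k))
                have hFC : F (Set.Iic (fpred k)) = T w (fpred k) := if_pos ⟨hk0, rfl⟩
                rwa [hFC]
            · rw [dif_neg hk0] at hA
              exact absurd hA (Set.notMem_empty _)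
      have hnode := IsConstruct.node (E := cubeEdges n) (Set.Iic m) Y F ⟨k, hkY⟩ hYm hrec
      rw [hset] at hnode
      have hT : T w m =
          insert (Set.Iic m)
            ({s | ∃ x : Fin n, k < x ∧ x ≤ m ∧ w x = 1 ∧ s = ({x} : Set (Fin n))} ∪
              (if h : 0 < k.val then T w (fpred k) else ∅)) := by
        conv_lhs => rw [T]
      rw [hT]
      exact hnode
  intro m h0
  exact H (m.val + 1) m (Nat.lt_succ_self _) h0

lemma two_ne_zero3 : (2 : Fin 3) ≠ 0 := by decide
lemma one_ne_zero3 : (1 : Fin 3) ≠ 0 := by decide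
lemma two_ne_one3 : (2 : Fin 3) ≠ 1 := by decide

lemma surjT : ∀ (m : Fin n) (S : Set (Set (Fin n))),
    IsConstruct (cubeEdges n) (Set.Iic m) S →
    ∃ w : Fin n → Fin 3, w ⟨0, m.pos⟩ = 0 ∧ S = T w m := by
  classical
  have H : ∀ N : ℕ, ∀ m : Fin n, m.val < N → ∀ S : Set (Set (Fin n)),
      IsConstruct (cubeEdges n) (Set.Iic m) S →
      ∃ w : Fin n → Fin 3, w ⟨0, m.pos⟩ = 0 ∧ S = T w m := by
    intro N
    induction N with
    | zero => intro m hm; omega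
    | succ N ih =>
      intro m hm S hS
      cases hS with
      | node H Y F hne hYsub hrec =>
        obtain ⟨k, hkY, hmin⟩ := Set.exists_min_image Y id Y.toFinite hne
        have hmin' : ∀ y ∈ Y, k ≤ y := hmin
        have hkm : k ≤ m := hYsub hkY
        by_cases hk0 : 0 < k.val
        · -- k > 0 : there is a recursive part on Iic (fpred k)
          have hcomp : IsCCOn (cubeEdges n) (Set.Iic m \ Y) (Set.Iic (fpred k)) :=
            (compChar m k Y hYsub hkY hmin' _).2 (Or.inl ⟨hk0, rfl⟩)
          have hfplt : (fpred k).val < N := by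
            have := Fin.le_def.1 hkm
            simp only [fpred]; omega
          obtain ⟨w', hw'0, hw'⟩ := ih (fpred k) hfplt _ (hrec _ hcomp)
          set w : Fin n → Fin 3 :=
            fun x => if x < k then w' x else if x = k then 0 else if x ∈ Y then 2 else 1
            with hwdef
          have hw0 : w ⟨0, m.pos⟩ = 0 := by
            have : (⟨0, m.pos⟩ : Fin n) < k := Fin.lt_def.2 hk0
            rw [hwdef]; simp only [if_pos this]; exact hw'0
          have hagree : ∀ x ≤ fpred k, w x = w' x := by
            intro x hx
            rw [hwdef]; simp only [if_pos ((le_fpred_iff hk0).1 hx)]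
          have hwk : w k = 0 := by
            rw [hwdef]; simp
          have hwgt : ∀ x : Fin n, k < x → w x = (if x ∈ Y then 2 else 1) := by
            intro x hx
            rw [hwdef]
            simp only [if_neg (not_lt.2 hx.le), if_neg (ne_of_gt hx)]
          have hkidx : kIdx w m = k := by
            apply Fin.ext
            show Nat.findGreatest _ m.val = k.val
            rw [Nat.findGreatest_eq_iff]
            refine ⟨Fin.le_def.1 hkm, fun _ => ⟨k.isLt, ?_⟩, ?_⟩
            · have : (⟨k.val, k.isLt⟩ : Fin n) = k := Fin.eta k k.isLt
              rw [this]; exact hwk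
            · rintro j hkj hjm ⟨hjn, hwj⟩
              have hx : k < (⟨j, hjn⟩ : Fin n) := Fin.lt_def.2 hkj
              rw [hwgt _ hx] at hwj
              by_cases hY : (⟨j, hjn⟩ : Fin n) ∈ Y
              · rw [if_pos hY] at hwj; exact two_ne_zero3 hwj
              · rw [if_neg hY] at hwj; exact one_ne_zero3 hwj
          have hTw' : T w (fpred k) = F (Set.Iic (fpred k)) := by
            rw [T_congr (fpred k) hagree, hw']
          have hset : (⋃ C ∈ {C | IsCCOn (cubeEdges n) (Set.Iic m \ Y) C}, F C) =
              {s | ∃ x : Fin n, k < x ∧ x ≤ m ∧ w x = 1 ∧ s = ({x} : Set (Fin n))} ∪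
                T w (fpred k) := by
            ext A
            simp only [Set.mem_iUnion, exists_prop, Set.mem_setOf_eq, Set.mem_union]
            constructor
            · rintro ⟨C, hC, hA⟩
              rw [compChar m k Y hYsub hkY hmin'] at hC
              rcases hC with ⟨-, rfl⟩ | ⟨x, hxm, hxY, hkx, rfl⟩
              · right; rwa [hTw']
              · left
                have hFx : F {x} = {({x} : Set (Fin n))} :=
                  isConstruct_singleton_eq (hrec _ ((compChar m k Y hYsub hkY hmin' _).2
                    (Or.inr ⟨x, hxm, hxY, hkx, rfl⟩)))
                rw [hFx, Set.mem_singleton_iff] at hA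
                refine ⟨x, hkx, hxm, ?_, hA⟩
                rw [hwgt _ hkx, if_neg hxY]
            · rintro (⟨x, hkx, hxm, hw1, rfl⟩ | hA)
              · have hxY : x ∉ Y := by
                  intro hY
                  rw [hwgt _ hkx, if_pos hY] at hw1
                  exact two_ne_one3 hw1
                have hCC : IsCCOn (cubeEdges n) (Set.Iic m \ Y) {x} :=
                  (compChar m k Y hYsub hkY hmin' _).2 (Or.inr ⟨x, hxm, hxY, hkx, rfl⟩)
                have hFx : F {x} = {({x} : Set (Fin n))} :=
                  isConstruct_singleton_eq (hrec _ hCC)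
                exact ⟨{x}, hCC, by rw [hFx]; exact rfl⟩
              · exact ⟨Set.Iic (fpred k), hcomp, by rwa [← hTw']⟩
          refine ⟨w, hw0, ?_⟩
          rw [hset]
          conv_rhs => rw [T]
          rw [hkidx, dif_pos hk0]
        · -- k = 0 : only singleton components
          set w : Fin n → Fin 3 :=
            fun x => if x = k then 0 else if x ∈ Y then 2 else 1 with hwdef
          have hzk : (⟨0, m.pos⟩ : Fin n) = k := by
            apply Fin.ext; simp only []; omega
          have hw0 : w ⟨0, m.pos⟩ = 0 := by rw [hwdef]; simp only [if_pos hzk]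
          have hwk : w k = 0 := by rw [hwdef]; simp
          have hwgt : ∀ x : Fin n, k < x → w x = (if x ∈ Y then 2 else 1) := by
            intro x hx
            rw [hwdef]; simp only [if_neg (ne_of_gt hx)]
          have hkidx : kIdx w m = k := by
            apply Fin.ext
            show Nat.findGreatest _ m.val = k.val
            rw [Nat.findGreatest_eq_iff]
            refine ⟨Fin.le_def.1 hkm, fun hne' => absurd (Nat.eq_zero_of_not_pos hk0) hne', ?_⟩
            rintro j hkj hjm ⟨hjn, hwj⟩
            have hx : k < (⟨j, hjn⟩ : Fin n) := Fin.lt_def.2 hkj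
            rw [hwgt _ hx] at hwj
            by_cases hY : (⟨j, hjn⟩ : Fin n) ∈ Y
            · rw [if_pos hY] at hwj; exact two_ne_zero3 hwj
            · rw [if_neg hY] at hwj; exact one_ne_zero3 hwj
          have hset : (⋃ C ∈ {C | IsCCOn (cubeEdges n) (Set.Iic m \ Y) C}, F C) =
              {s | ∃ x : Fin n, k < x ∧ x ≤ m ∧ w x = 1 ∧ s = ({x} : Set (Fin n))} ∪
                (∅ : Set (Set (Fin n))) := by
            ext A
            simp only [Set.mem_iUnion, exists_prop, Set.mem_setOf_eq, Set.mem_union,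
              Set.mem_empty_iff_false, or_false]
            constructor
            · rintro ⟨C, hC, hA⟩
              rw [compChar m k Y hYsub hkY hmin'] at hC
              rcases hC with ⟨hk0', -⟩ | ⟨x, hxm, hxY, hkx, rfl⟩
              · exact absurd hk0' hk0
              · have hFx : F {x} = {({x} : Set (Fin n))} :=
                  isConstruct_singleton_eq (hrec _ ((compChar m k Y hYsub hkY hmin' _).2
                    (Or.inr ⟨x, hxm, hxY, hkx, rfl⟩)))
                rw [hFx, Set.mem_singleton_iff] at hA
                refine ⟨x, hkx, hxm, ?_, hA⟩
                rw [hwgt _ hkx, if_neg hxY]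
            · rintro ⟨x, hkx, hxm, hw1, rfl⟩
              have hxY : x ∉ Y := by
                intro hY
                rw [hwgt _ hkx, if_pos hY] at hw1
                exact two_ne_one3 hw1
              have hCC : IsCCOn (cubeEdges n) (Set.Iic m \ Y) {x} :=
                (compChar m k Y hYsub hkY hmin' _).2 (Or.inr ⟨x, hxm, hxY, hkx, rfl⟩)
              have hFx : F {x} = {({x} : Set (Fin n))} :=
                isConstruct_singleton_eq (hrec _ hCC)
              exact ⟨{x}, hCC, by rw [hFx]; exact rfl⟩
          refine ⟨w, hw0, ?_⟩
          rw [hset]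
          conv_rhs => rw [T]
          rw [hkidx, dif_neg hk0]
  intro m S hS
  exact H (m.val + 1) m (Nat.lt_succ_self _) S hS

lemma fin3_eq {a b : Fin 3} (ha : a ≠ 0) (hb : b ≠ 0) (h : (a = 1) ↔ (b = 1)) : a = b := by
  rcases fin3_cases a with rfl | rfl | rfl <;> rcases fin3_cases b with rfl | rfl | rfl <;>
    simp_all

lemma Iic_m_not_mem_parts {w : Fin n → Fin 3} {m : Fin n} :
    Set.Iic m ∉ ({s | ∃ x : Fin n, kIdx w m < x ∧ x ≤ m ∧ w x = 1 ∧ s = ({x} : Set (Fin n))} ∪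
      (if h : 0 < (kIdx w m).val then T w (fpred (kIdx w m)) else ∅)) := by
  rintro (⟨x, hkx, hxm, hw1, hx⟩ | hmem)
  · -- Iic m = {x} with kIdx w m < x : impossible since 0 and m would both equal x
    have hz : zf m ∈ Set.Iic m := Set.mem_Iic.2 (zf_le m m)
    have hm : m ∈ Set.Iic m := Set.mem_Iic.2 le_rfl
    rw [hx, Set.mem_singleton_iff] at hz hm
    have h1 : (0 : ℕ) = x.val := congrArg Fin.val hz
    have h2 : m.val = x.val := congrArg Fin.val hm
    have h3 := Fin.lt_def.1 hkx
    have h4 := Fin.le_def.1 hxm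
    omega
  · rcases Nat.decLt 0 (kIdx w m).val with h | h
    · rw [dif_neg h] at hmem; exact hmem
    · rw [dif_pos h] at hmem
      have := T_subset_Iic w _ _ hmem (Set.mem_Iic.2 (le_refl m))
      rw [Set.mem_Iic, Fin.le_def] at this
      have h1 : (kIdx w m).val ≤ m.val := Nat.findGreatest_le _
      simp only [fpred] at this
      omega

lemma sUnion_T (w : Fin n → Fin 3) (m : Fin n) (h0 : w ⟨0, m.pos⟩ = 0) :
    Set.Iic m \ ⋃₀ (T w m \ {Set.Iic m}) =
      {x | kIdx w m ≤ x ∧ x ≤ m ∧ w x ≠ 1} := by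
  classical
  set k : Fin n := kIdx w m with hkdef
  have hdiff : T w m \ {Set.Iic m} =
      {s | ∃ x : Fin n, k < x ∧ x ≤ m ∧ w x = 1 ∧ s = ({x} : Set (Fin n))} ∪
        (if h : 0 < k.val then T w (fpred k) else ∅) := by
    conv_lhs => rw [T]
    rw [Set.insert_diff_self_of_notMem Iic_m_not_mem_parts]
  rw [hdiff, Set.sUnion_union]
  have h1 : ⋃₀ {s | ∃ x : Fin n, k < x ∧ x ≤ m ∧ w x = 1 ∧ s = ({x} : Set (Fin n))} =
      {x : Fin n | k < x ∧ x ≤ m ∧ w x = 1} := by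
    ext y
    simp only [Set.mem_sUnion, Set.mem_setOf_eq]
    constructor
    · rintro ⟨s, ⟨x, h1, h2, h3, rfl⟩, hy⟩
      rw [Set.mem_singleton_iff] at hy
      exact hy ▸ ⟨h1, h2, h3⟩
    · rintro ⟨h1, h2, h3⟩
      exact ⟨{y}, ⟨y, h1, h2, h3, rfl⟩, rfl⟩
  have h2 : ⋃₀ (if h : 0 < k.val then T w (fpred k) else ∅) =
      (if 0 < k.val then Set.Iic (fpred k) else ∅) := by
    by_cases h : 0 < k.val
    · rw [dif_pos h, if_pos h]
      apply Set.Subset.antisymm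
      · intro y hy
        rw [Set.mem_sUnion] at hy
        obtain ⟨s, hs, hy⟩ := hy
        exact T_subset_Iic w _ _ hs hy
      · intro y hy
        exact Set.mem_sUnion.2 ⟨Set.Iic (fpred k), T_self_mem w _, hy⟩
    · rw [dif_neg h, if_neg h]
      exact Set.sUnion_empty
  rw [h1, h2]
  have hwk : w k = 0 := kIdx_spec m h0
  ext x
  simp only [Set.mem_diff, Set.mem_Iic, Set.mem_union, Set.mem_setOf_eq, not_or]
  constructor
  · rintro ⟨hxm, hns, hni⟩
    have hkx : k ≤ x := by
      by_contra hlt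
      rw [not_le] at hlt
      have hk0 : 0 < k.val := lt_of_le_of_lt (Nat.zero_le _) (Fin.lt_def.1 hlt)
      rw [if_pos hk0] at hni
      exact hni (Set.mem_Iic.2 ((le_fpred_iff hk0).2 hlt))
    refine ⟨hkx, hxm, ?_⟩
    intro hw1
    rcases lt_or_eq_of_le hkx with h | h
    · exact hns ⟨h, hxm, hw1⟩
    · rw [← h, hwk] at hw1
      exact ne_one_of_zero hw1
  · rintro ⟨hkx, hxm, hw1⟩
    refine ⟨hxm, fun hc => hw1 hc.2.2, ?_⟩
    by_cases hk0 : 0 < k.val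
    · rw [if_pos hk0]
      intro hc
      rw [Set.mem_Iic, le_fpred_iff hk0] at hc
      exact absurd hkx (not_le.2 hc)
    · rw [if_neg hk0]
      exact Set.notMem_empty x

lemma T_filter (w : Fin n → Fin 3) (m : Fin n) (hk0 : 0 < (kIdx w m).val) :
    {A ∈ T w m | A ⊆ Set.Iic (fpred (kIdx w m))} = T w (fpred (kIdx w m)) := by
  have hkm : (kIdx w m).val ≤ m.val := Nat.findGreatest_le _
  ext A
  simp only [Set.mem_sep_iff]
  constructor
  · rintro ⟨hA, hsub⟩
    rw [T] at hA
    rcases hA with rfl | hA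
    · exfalso
      have := hsub (Set.mem_Iic.2 (le_refl m))
      rw [Set.mem_Iic, Fin.le_def] at this
      simp only [fpred] at this
      omega
    rcases hA with ⟨x, hkx, hxm, hw1, rfl⟩ | hA
    · exfalso
      have := hsub rfl
      rw [Set.mem_Iic, le_fpred_iff hk0] at this
      exact absurd hkx (not_lt.2 this.le)
    · rwa [dif_pos hk0] at hA
  · intro hA
    refine ⟨?_, T_subset_Iic w _ _ hA⟩
    rw [T]
    right
    right
    rwa [dif_pos hk0]

lemma T_inj : ∀ (m : Fin n) (w w' : Fin n → Fin 3), w ⟨0, m.pos⟩ = 0 → w' ⟨0, m.pos⟩ = 0 →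
    T w m = T w' m → ∀ x ≤ m, w x = w' x := by
  have H : ∀ N : ℕ, ∀ m : Fin n, m.val < N → ∀ w w' : Fin n → Fin 3,
      w ⟨0, m.pos⟩ = 0 → w' ⟨0, m.pos⟩ = 0 →
      T w m = T w' m → ∀ x ≤ m, w x = w' x := by
    intro N
    induction N with
    | zero => intro m hm; omega
    | succ N ih =>
      intro m hm w w' h0 h0' hT x hxm
      have hY : {x | kIdx w m ≤ x ∧ x ≤ m ∧ w x ≠ 1} =
          {x | kIdx w' m ≤ x ∧ x ≤ m ∧ w' x ≠ 1} := by
        rw [← sUnion_T w m h0, ← sUnion_T w' m h0', hT]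
      have hwk : w (kIdx w m) = 0 := kIdx_spec m h0
      have hwk' : w' (kIdx w' m) = 0 := kIdx_spec m h0'
      have hkk : kIdx w m = kIdx w' m := by
        have h1 : kIdx w m ∈ {x | kIdx w' m ≤ x ∧ x ≤ m ∧ w' x ≠ 1} := by
          rw [← hY]
          exact ⟨le_rfl, kIdx_le w m, by rw [hwk]; exact ne_one_of_zero⟩
        have h2 : kIdx w' m ∈ {x | kIdx w m ≤ x ∧ x ≤ m ∧ w x ≠ 1} := by
          rw [hY]
          exact ⟨le_rfl, kIdx_le w' m, by rw [hwk']; exact ne_one_of_zero⟩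
        exact le_antisymm h2.1 h1.1
      rcases lt_trichotomy x (kIdx w m) with hlt | heq | hgt
      · -- x below the last + : use the recursive part
        have hk0 : 0 < (kIdx w m).val := lt_of_le_of_lt (Nat.zero_le _) (Fin.lt_def.1 hlt)
        have hsub : T w (fpred (kIdx w m)) = T w' (fpred (kIdx w m)) := by
          rw [← T_filter w m hk0, hT, hkk, T_filter w' m (hkk ▸ hk0)]
        have hlt' : (fpred (kIdx w m)).val < N := by
          have h1 : (kIdx w m).val ≤ m.val := Nat.findGreatest_le _
          simp only [fpred]
          omega
        exact ih (fpred (kIdx w m)) hlt' w w' h0 h0' hsub x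
          (Set.mem_Iic.1 (Set.mem_Iic.2 ((le_fpred_iff hk0).2 hlt)))
      · rw [heq, hwk, hkk]; exact hwk'.symm
      · -- x above the last +
        have hw0 : w x ≠ 0 := kIdx_gt hgt hxm
        have hw0' : w' x ≠ 0 := kIdx_gt (hkk ▸ hgt) hxm
        apply fin3_eq hw0 hw0'
        constructor
        · intro h1
          by_contra h1'
          have : x ∈ {x | kIdx w' m ≤ x ∧ x ≤ m ∧ w' x ≠ 1} :=
            ⟨(hkk ▸ hgt).le, hxm, h1'⟩
          rw [← hY] at this
          exact this.2.2 h1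
        · intro h1
          by_contra h1'
          have : x ∈ {x | kIdx w m ≤ x ∧ x ≤ m ∧ w x ≠ 1} := ⟨hgt.le, hxm, h1'⟩
          rw [hY] at this
          exact this.2.2 h1
  intro m
  exact H (m.val + 1) m (Nat.lt_succ_self _)

end Stmt15

open Stmt15 in
/-- The constructs of the hypercube hypergraph `𝐂^X` on `X = {x₁ < ⋯ < x_n}` are in
bijection with the words of length `n` over the alphabet `{+, −, •}` (encoded as `Fin 3`,
with `0 = +`) whose first letter is `+`. -/
theorem stmt15 (n : ℕ) (hn : 0 < n) :
    Nonempty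
      ({S : Set (Set (Fin n)) // IsConstruct (cubeEdges n) Set.univ S} ≃
        {w : Fin n → Fin 3 // w ⟨0, hn⟩ = 0}) := by
  classical
  set last : Fin n := ⟨n - 1, by omega⟩ with hlastdef
  have hlast : Set.Iic last = Set.univ := by
    apply Set.eq_univ_of_forall
    intro x
    rw [Set.mem_Iic, Fin.le_def]
    have := x.isLt
    simp only [hlastdef]
    omega
  have hle : ∀ x : Fin n, x ≤ last := fun x => by
    rw [Fin.le_def]
    have := x.isLt
    simp only [hlastdef]
    omega
  let f : {w : Fin n → Fin 3 // w ⟨0, hn⟩ = 0} →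
      {S : Set (Set (Fin n)) // IsConstruct (cubeEdges n) Set.univ S} :=
    fun w => ⟨T w.1 last, hlast ▸ constructT w.1 last w.2⟩
  have hinj : Function.Injective f := by
    intro w w' h
    have hT : T w.1 last = T w'.1 last := congrArg Subtype.val h
    apply Subtype.ext
    funext x
    exact T_inj last w.1 w'.1 w.2 w'.2 hT x (hle x)
  have hsurj : Function.Surjective f := by
    intro S
    have hS : IsConstruct (cubeEdges n) (Set.Iic last) S.1 := by
      rw [hlast]; exact S.2
    obtain ⟨w, hw0, hw⟩ := surjT last S.1 hS
    exact ⟨⟨w, hw0⟩, Subtype.ext hw.symm⟩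
  exact ⟨(Equiv.ofBijective f ⟨hinj, hsurj⟩).symm⟩
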